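/- Let R ⊆ S be commutative rings with R local, and let M ⊆ S be an R-submodule with 1 ∈ M. Suppose that for some integer n ≥ 0 the R-module ⋃_{k ≥ 0} Mᵏ can be generated by at most n + 1 elements and that (Mⁿ : Mⁿ)_S = R. Then M = R. -/

import Mathlib

open Submodule IsLocalRing

attribute [local instance] Ideal.Quotient.field

section Promote

variable {R : Type*} [CommRing R] (I : Ideal R) {Q : Type*} [AddCommGroup Q] [Module R Q]
variable [Module (R ⧸ I) Q] [IsScalarTower R (R ⧸ I) Q]

/-- Promote an `R`-submodule of a module over `R ⧸ I` to an `R ⧸ I`-submodule. -/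
def promoteQuot (X : Submodule R Q) : Submodule (R ⧸ I) Q where
  carrier := X
  add_mem' := fun h h' => X.add_mem h h'
  zero_mem' := X.zero_mem
  smul_mem' := fun c x hx => by
    obtain ⟨r, rfl⟩ := Ideal.Quotient.mk_surjective c
    have hc : (Ideal.Quotient.mk I r) • x = r • x := by
      rw [← Ideal.Quotient.algebraMap_eq, algebraMap_smul]
    rw [hc]; exact X.smul_mem r hx

lemma promoteQuot_strictMono : StrictMono (promoteQuot I (Q := Q)) := by
  intro X Y h
  refine lt_of_le_of_ne (fun x hx => h.le hx) ?_
  intro heq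
  refine h.ne (le_antisymm h.le fun x hx => ?_)
  have hx2 : x ∈ promoteQuot I Y := hx
  rw [← heq] at hx2
  exact hx2

end Promote

section Aux

variable {R : Type*} [CommRing R] [IsLocalRing R] {S : Type*} [CommRing S] [Algebra R S]

lemma aux_mul_smul_le (N P : Submodule R S) (I : Ideal R) : N * (I • P) ≤ I • (N * P) := by
  rw [Submodule.mul_le]
  intro m hm y hy
  refine Submodule.smul_induction_on hy (fun r hr p hp => ?_) (fun a b ha hb => ?_)
  · rw [mul_smul_comm]
    exact Submodule.smul_mem_smul hr (Submodule.mul_mem_mul hm hp)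
  · rw [mul_add]
    exact add_mem ha hb

set_option maxHeartbeats 1000000 in
set_option synthInstance.maxHeartbeats 400000 in
lemma aux_main (M : Submodule R S) (h1 : (1 : S) ∈ M) (n : ℕ)
    (hgen : ∃ T : Finset S, T.card ≤ n + 1 ∧
      Submodule.span R (T : Set S) = ⨆ k : ℕ, M ^ k)
    (hdiv : (M ^ n / M ^ n : Submodule R S) = 1) :
    M = 1 := by
  rcases subsingleton_or_nontrivial S with hS | hS
  · ext x; simp [Subsingleton.elim x 0]
  obtain ⟨T, hTcard, hTspan⟩ := hgen
  -- the chain of powers is monotone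
  have hmono : Monotone fun k => M ^ k := by
    refine monotone_nat_of_le_succ fun k x hx => ?_
    rw [pow_succ]
    simpa using Submodule.mul_mem_mul hx h1
  set A : Submodule R S := ⨆ k : ℕ, M ^ k with hA
  have hpowA : ∀ k, M ^ k ≤ A := fun k => le_iSup (fun k => M ^ k) k
  have hmemA : ∀ x, x ∈ A ↔ ∃ k, x ∈ M ^ k := fun x =>
    Submodule.mem_iSup_of_chain ⟨fun k => M ^ k, hmono⟩ x
  have hAfg : A.FG := ⟨T, hTspan⟩
  -- A = M ^ N for some N
  have hTA : (T : Set S) ⊆ A := hTspan ▸ Submodule.subset_span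
  have hexN : ∃ N, ∀ t ∈ T, t ∈ (M ^ N : Submodule R S) := by
    have h : ∀ t ∈ T, ∃ k, t ∈ (M ^ k : Submodule R S) := fun t ht => (hmemA t).1 (hTA ht)
    choose f hf using h
    classical
    refine ⟨T.attach.sup (fun t => f t t.2), fun t ht => ?_⟩
    exact hmono (Finset.le_sup (Finset.mem_attach T ⟨t, ht⟩)) (hf t ht)
  obtain ⟨N, hN⟩ := hexN
  have hAN : A = M ^ N := by
    refine le_antisymm ?_ (hpowA N)
    rw [← hTspan]
    exact Submodule.span_le.2 fun t ht => hN t ht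
  -- the maximal ideal and B = m • A
  set I : Ideal R := maximalIdeal R with hI
  have hIjac : I ≤ Ideal.jacobson ⊥ := (jacobson_eq_maximalIdeal ⊥ bot_ne_top).ge
  set B : Submodule R S := I • A with hB
  have hBA : B ≤ A := Submodule.smul_le_right
  have hmulA : ∀ k, M ^ k * A ≤ A := by
    intro k
    rw [Submodule.mul_le]
    intro m hm a ha
    obtain ⟨j, hj⟩ := (hmemA a).1 ha
    exact hpowA (k + j) (pow_add M k j ▸ Submodule.mul_mem_mul hm hj)
  have hmulB : ∀ k, M ^ k * B ≤ B := fun k =>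
    (aux_mul_smul_le (M ^ k) A I).trans (smul_mono_right I (hmulA k))
  have h1A : (1 : S) ∈ A := hpowA 0 (by rw [pow_zero]; exact Submodule.one_le.1 le_rfl)
  -- 1 ∉ B
  have h1B : (1 : S) ∉ B := by
    intro h1B
    have hAB : A ≤ B := by
      intro x hx
      obtain ⟨k, hk⟩ := (hmemA x).1 hx
      have : x * 1 ∈ M ^ k * B := Submodule.mul_mem_mul hk h1B
      rw [mul_one] at this
      exact hmulB k this
    have : A ≤ ⊥ := Submodule.le_of_le_smul_of_le_jacobson_bot hAfg hIjac
      (by simpa using hAB)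
    simpa using (Submodule.mem_bot R).1 (this h1A)
  by_cases hstep : ∃ j ≤ n, M ^ (j + 1) ≤ M ^ j ⊔ B
  · -- Nakayama case: A = M ^ j, then M ^ n = A and M ≤ (Mⁿ : Mⁿ) = 1
    obtain ⟨j, hjn, hle⟩ := hstep
    have hiter : ∀ i, M ^ (j + i) ≤ M ^ j ⊔ B := by
      intro i
      induction i with
      | zero => simpa using le_sup_left
      | succ i ih =>
        have hrw : M ^ (j + (i + 1)) = M ^ (j + 1) * M ^ i := by
          rw [← pow_add]; congr 1; omega
        rw [hrw]
        calc M ^ (j + 1) * M ^ i ≤ (M ^ j ⊔ B) * M ^ i :=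
              mul_le_mul' hle le_rfl
          _ = M ^ j * M ^ i ⊔ B * M ^ i := Submodule.sup_mul _ _ _
          _ ≤ (M ^ j ⊔ B) ⊔ B := by
              refine sup_le_sup ?_ ?_
              · rw [← pow_add]; exact ih
              · rw [mul_comm]; exact hmulB i
          _ = M ^ j ⊔ B := by rw [sup_assoc, sup_idem]
    have hAle : A ≤ M ^ j ⊔ B := hAN ▸ (hmono (Nat.le_add_left N j)).trans (hiter N)
    have hAMj : A ≤ M ^ j :=
      Submodule.le_of_le_smul_of_le_jacobson_bot hAfg hIjac hAle
    have hAeq : A = M ^ j := le_antisymm hAMj (hpowA j)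
    have hMn : M ^ n = A := le_antisymm (hpowA n) (hAeq ▸ hmono hjn)
    have hMle : M ≤ (M ^ n / M ^ n : Submodule R S) := by
      intro x hx
      rw [Submodule.mem_div_iff_forall_mul_mem]
      intro y hy
      rw [hMn]
      refine hmulA 1 ?_
      rw [hMn] at hy
      exact Submodule.mul_mem_mul (by simpa using hx) hy
    rw [hdiv] at hMle
    refine le_antisymm hMle (Submodule.one_le.2 h1)
  · -- dimension-count contradiction
    exfalso
    push_neg at hstep
    set W : ℕ → Submodule R S := fun j => M ^ j ⊔ B with hW
    have hWA : ∀ j, W j ≤ A := fun j => sup_le (hpowA j) hBA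
    have hWmono : ∀ j ≤ n, W j < W (j + 1) := by
      intro j hj
      refine lt_of_le_of_ne (sup_le_sup_right (hmono (Nat.le_succ j)) B) ?_
      intro heq
      have h2 : M ^ (j + 1) ≤ W (j + 1) := le_sup_left
      rw [← heq] at h2
      exact hstep j hj h2
    -- move to the quotient Q = A / I•A over the residue field
    set P : Submodule R ↥A := I • ⊤ with hP
    have hmapP : Submodule.map A.subtype P = B := by
      rw [hP, Submodule.map_smul'', Submodule.map_subtype_top]
    letI : Module (R ⧸ I) (↥A ⧸ P) := inferInstance
    letI : IsScalarTower R (R ⧸ I) (↥A ⧸ P) := inferInstance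
    set Nn : ℕ → Submodule R ↥A := fun j => Submodule.comap A.subtype (W j) with hNn
    have hmapN : ∀ j, Submodule.map A.subtype (Nn j) = W j := by
      intro j
      rw [hNn, Submodule.map_comap_subtype, inf_eq_right.2 (hWA j)]
    have hPN : ∀ j, P ≤ Nn j := by
      intro j
      rw [hNn, ← Submodule.map_le_iff_le_comap, hmapP]
      exact le_sup_right
    set V : ℕ → Submodule R (↥A ⧸ P) := fun j => Submodule.map P.mkQ (Nn j) with hV
    have hVmono : ∀ j ≤ n, V j < V (j + 1) := by
      intro j hj
      have hle : V j ≤ V (j + 1) := Submodule.map_mono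
        (Submodule.comap_mono (hWmono j hj).le)
      refine lt_of_le_of_ne hle ?_
      intro heq
      have h2 := congrArg (Submodule.comap P.mkQ) heq
      simp only [hV, Submodule.comap_map_mkQ] at h2
      rw [sup_eq_right.2 (hPN j), sup_eq_right.2 (hPN (j + 1))] at h2
      have h3 := congrArg (Submodule.map A.subtype) h2
      rw [hmapN j, hmapN (j + 1)] at h3
      exact (hWmono j hj).ne h3
    have hV0 : (⊥ : Submodule R (↥A ⧸ P)) < V 0 := by
      refine lt_of_le_of_ne bot_le ?_
      intro heq
      have h1W : (1 : S) ∈ W 0 := le_sup_left (α := Submodule R S)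
        (by rw [pow_zero]; exact Submodule.one_le.1 le_rfl : (1:S) ∈ M ^ 0)
      have h1N : (⟨1, h1A⟩ : ↥A) ∈ Nn 0 := by
        rw [hNn]; simpa using h1W
      have : P.mkQ ⟨1, h1A⟩ ∈ V 0 := Submodule.mem_map_of_mem h1N
      rw [← heq] at this
      have h1P : (⟨1, h1A⟩ : ↥A) ∈ P := by
        simpa [Submodule.mkQ_apply, Submodule.Quotient.mk_eq_zero] using this
      have := hmapP ▸ Submodule.mem_map_of_mem (f := A.subtype) h1P
      exact h1B this
    -- Q is spanned over the residue field by at most n+1 elements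
    classical
    set T' : Finset ↥A := T.attach.map
      ⟨fun t => (⟨t.1, hTA t.2⟩ : ↥A),
        fun a b hab => Subtype.ext (by have h := congrArg Subtype.val hab; exact h)⟩ with hT'
    have hT'coe : A.subtype '' (T' : Set ↥A) = (T : Set S) := by
      ext x
      constructor
      · rintro ⟨y, hy, rfl⟩
        rw [hT'] at hy
        simp only [Finset.coe_map, Set.mem_image, Finset.mem_coe, Finset.mem_map,
          Function.Embedding.coeFn_mk] at hy
        obtain ⟨t, _, rfl⟩ := hy
        exact t.2
      · intro hx
        refine ⟨⟨x, hTA hx⟩, ?_, rfl⟩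
        rw [hT']
        simp only [Finset.coe_map, Set.mem_image, Finset.mem_coe, Finset.mem_map,
          Function.Embedding.coeFn_mk]
        exact ⟨⟨x, hx⟩, Finset.mem_attach _ _, rfl⟩
    have hT'span : Submodule.span R (T' : Set ↥A) = ⊤ := by
      apply Submodule.map_injective_of_injective (Submodule.injective_subtype A)
      rw [Submodule.map_span, Submodule.map_subtype_top, hT'coe, hTspan]
    set s : Finset (↥A ⧸ P) := T'.image P.mkQ with hs
    have hscard : s.card ≤ n + 1 := by
      refine le_trans ?_ hTcard
      refine (Finset.card_image_le).trans ?_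
      rw [hT', Finset.card_map, Finset.card_attach]
    have hspanR : Submodule.span R (s : Set (↥A ⧸ P)) = ⊤ := by
      rw [hs, Finset.coe_image, ← Submodule.map_span, hT'span, Submodule.map_top,
        Submodule.range_mkQ]
    have hspanK : Submodule.span (R ⧸ I) (s : Set (↥A ⧸ P)) = ⊤ := by
      apply Submodule.restrictScalars_injective R
      rw [Submodule.restrictScalars_span R (R ⧸ I)
        (by rw [Ideal.Quotient.algebraMap_eq]; exact Ideal.Quotient.mk_surjective),
        hspanR]
      rfl
    -- Q is finite dimensional of dimension ≤ n + 1
    haveI : Module.Finite (R ⧸ I) (↥A ⧸ P) :=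
      Module.finite_def.mpr ⟨s, hspanK⟩
    have hfr : Module.finrank (R ⧸ I) (↥A ⧸ P) ≤ n + 1 := by
      have h2 := finrank_span_finset_le_card (R := R ⧸ I) s
      rw [Set.finrank, hspanK, finrank_top] at h2
      exact h2.trans hscard
    -- strict chain of subspaces gives finrank ≥ n + 2
    have hchain : ∀ j ≤ n + 1, j + 1 ≤ Module.finrank (R ⧸ I) (promoteQuot I (V j)) := by
      intro j hj
      induction j with
      | zero =>
        have : promoteQuot I (⊥ : Submodule R (↥A ⧸ P)) < promoteQuot I (V 0) :=
          promoteQuot_strictMono I hV0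
        have hbot : promoteQuot I (⊥ : Submodule R (↥A ⧸ P)) = ⊥ := by
          refine le_antisymm (fun x hx => ?_) bot_le
          exact hx
        rw [hbot] at this
        have h0 := Submodule.finrank_lt_finrank_of_lt this
        rw [finrank_bot] at h0
        omega
      | succ j ih =>
        have hlt : promoteQuot I (V j) < promoteQuot I (V (j + 1)) :=
          promoteQuot_strictMono I (hVmono j (by omega))
        have := Submodule.finrank_lt_finrank_of_lt hlt
        have hih := ih (le_trans (Nat.le_succ j) hj)
        omega
    have hlast := hchain (n + 1) le_rfl
    have hle := Submodule.finrank_le (promoteQuot I (V (n + 1)))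
    omega

end Aux

/-- Let `R ⊆ S` be commutative rings with `R` local, and `M ⊆ S` an `R`-submodule
with `1 ∈ M`. If for some `n ≥ 0` the `R`-module `⋃_{k ≥ 0} Mᵏ` can be generated by
at most `n + 1` elements and `(Mⁿ : Mⁿ)_S = R`, then `M = R`. -/
theorem stmt_11 {S : Type*} [CommRing S] (R : Subring S) [IsLocalRing ↥R]
    (M : Submodule ↥R S) (h1 : (1 : S) ∈ M) (n : ℕ)
    (hgen : ∃ T : Finset S, T.card ≤ n + 1 ∧
      Submodule.span ↥R (T : Set S) = ⨆ k : ℕ, M ^ k)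
    (hdiv : (M ^ n / M ^ n : Submodule ↥R S) = 1) :
    M = 1 := by
  exact aux_main M h1 n hgen hdiv
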